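/- arXiv:1801.07304 — 2 statements merged into one kernel-verified Lean document; each statement's English description precedes it below -/
import Mathlib

section
/- For all real α > -1, β > 0 and all z ∈ ℂ, the normalized Bessel functions satisfy the Sonine formula j_{α+β}(z) = 2 (Γ(α+β+1)/(Γ(α+1)Γ(β))) ∫₀¹ j_α(zx) x^{2α+1} (1-x²)^{β-1} dx. -/
open MeasureTheory Complex

open Set

private lemma gammaLB {γ : ℝ} (hγ : 0 < γ) (k : ℕ) :
    min 1 γ * Real.Gamma γ ≤ Real.Gamma (γ + k) := by
  have hΓ : 0 < Real.Gamma γ := Real.Gamma_pos_of_pos hγ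
  induction k with
  | zero => simpa using mul_le_of_le_one_left hΓ.le (min_le_left 1 γ)
  | succ n ih =>
      have h1 : Real.Gamma (γ + ((n:ℕ)+1 : ℕ)) = (γ + n) * Real.Gamma (γ + n) := by
        rw [show γ + (((n:ℕ)+1 : ℕ) : ℝ) = (γ + n) + 1 by push_cast; ring,
          Real.Gamma_add_one (by positivity)]
      rw [h1]
      rcases Nat.eq_zero_or_pos n with h | h
      · subst h
        simp only [Nat.cast_zero, add_zero] at ih ⊢
        exact le_trans (mul_le_mul_of_nonneg_right (min_le_right 1 γ) hΓ.le) le_rfl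
      · have hg : (1:ℝ) ≤ γ + n := by
          have : (1:ℝ) ≤ (n:ℝ) := by exact_mod_cast h
          linarith
        calc min 1 γ * Real.Gamma γ ≤ Real.Gamma (γ + n) := ih
          _ = 1 * Real.Gamma (γ + n) := (one_mul _).symm
          _ ≤ (γ + n) * Real.Gamma (γ + n) :=
              mul_le_mul_of_nonneg_right hg (Real.Gamma_pos_of_pos (by positivity)).le

private lemma sqImage : (fun x : ℝ => x ^ 2) '' Set.Ioc 0 1 = Set.Ioc 0 1 := by
  ext t
  constructor
  · rintro ⟨x, ⟨hx0, hx1⟩, rfl⟩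
    refine ⟨by positivity, ?_⟩
    show x^2 ≤ 1
    nlinarith
  · rintro ⟨ht0, ht1⟩
    exact ⟨Real.sqrt t, ⟨Real.sqrt_pos.2 ht0, by
      rw [show (1:ℝ) = Real.sqrt 1 by simp]; exact Real.sqrt_le_sqrt ht1⟩,
      Real.sq_sqrt ht0.le⟩

private lemma sqInj : Set.InjOn (fun x : ℝ => x ^ 2) (Set.Ioc 0 1) := by
  rintro x ⟨hx, _⟩ y ⟨hy, _⟩ h
  simp only at h
  nlinarith [sq_nonneg (x - y), sq_nonneg (x + y)]


private lemma keyInt {α β : ℝ} (hα : -1 < α) (hβ : 0 < β) (k : ℕ) :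
    IntegrableOn (fun x : ℝ => (x:ℂ)^(2*k) *
        ((x ^ (2*α+1 : ℝ) * (1-x^2) ^ (β-1 : ℝ) : ℝ) : ℂ)) (Set.Ioc 0 1) ∧
    ∫ x in Set.Ioc (0:ℝ) 1, (x:ℂ)^(2*k) *
        ((x ^ (2*α+1 : ℝ) * (1-x^2) ^ (β-1 : ℝ) : ℝ) : ℂ)
      = (Real.Gamma (α+k+1) : ℂ) * (Real.Gamma β : ℂ) / (2 * (Real.Gamma (α+β+k+1) : ℂ)) := by
  have hk0 : (0:ℝ) ≤ (k:ℝ) := Nat.cast_nonneg k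
  set Fk : ℝ → ℂ := fun x => (x:ℂ)^(2*k) *
      ((x ^ (2*α+1 : ℝ) * (1-x^2) ^ (β-1 : ℝ) : ℝ) : ℂ) with hFk
  set g : ℝ → ℂ := fun t => ((t ^ (α+(k:ℝ)) * (1-t) ^ (β-1 : ℝ) : ℝ) : ℂ) with hg
  set gc : ℝ → ℂ := fun t => (t:ℂ) ^ (((α:ℂ)+(k:ℕ)+1) - 1) * (1-(t:ℂ)) ^ ((β:ℂ)-1) with hgc
  -- EqOn gc g on Ioc 0 1
  have h1 : Set.EqOn gc g (Set.Ioc 0 1) := by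
    intro x hx
    have hx0 : (0:ℝ) < x := hx.1
    have h1x : (0:ℝ) ≤ 1 - x := by linarith [hx.2]
    have e1 : ((α + k : ℝ) : ℂ) = ((α:ℂ)+(k:ℕ)+1) - 1 := by push_cast; ring
    have e2 : ((β - 1 : ℝ) : ℂ) = (β:ℂ) - 1 := by push_cast; ring
    show (x:ℂ) ^ (((α:ℂ)+(k:ℕ)+1) - 1) * (1-(x:ℂ)) ^ ((β:ℂ)-1)
        = ((x ^ (α+(k:ℝ)) * (1-x) ^ (β-1 : ℝ) : ℝ) : ℂ)
    rw [Complex.ofReal_mul, Complex.ofReal_cpow hx0.le, Complex.ofReal_cpow h1x,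
      e1, e2, Complex.ofReal_sub, Complex.ofReal_one]
  have hre1 : 0 < ((α:ℂ)+(k:ℕ)+1).re := by
    simp only [Complex.add_re, Complex.ofReal_re, Complex.natCast_re, Complex.one_re]
    linarith
  have hre2 : 0 < ((β:ℂ)).re := by simpa using hβ
  -- integrability of gc, g
  have hgcInt : IntegrableOn gc (Set.Ioc 0 1) := by
    have := Complex.betaIntegral_convergent hre1 hre2
    exact (intervalIntegrable_iff_integrableOn_Ioc_of_le zero_le_one).1 this
  have hgInt : IntegrableOn g (Set.Ioc 0 1) :=
    hgcInt.congr_fun h1 measurableSet_Ioc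
  -- value of ∫ g
  have hgVal : ∫ t in Set.Ioc (0:ℝ) 1, g t = Complex.betaIntegral ((α:ℂ)+(k:ℕ)+1) (β:ℂ) := by
    rw [Complex.betaIntegral, intervalIntegral.integral_of_le zero_le_one]
    exact (setIntegral_congr_fun measurableSet_Ioc h1).symm
  -- change of variables
  have hderiv : ∀ x ∈ Set.Ioc (0:ℝ) 1,
      HasDerivWithinAt (fun y : ℝ => y ^ 2) (2 * x) (Set.Ioc 0 1) x := by
    intro x _
    simpa using (hasDerivAt_pow 2 x).hasDerivWithinAt
  have hcv : ∫ t in Set.Ioc (0:ℝ) 1, g t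
      = ∫ x in Set.Ioc (0:ℝ) 1, |2 * x| • g (x ^ 2) := by
    conv_lhs => rw [← sqImage]
    exact integral_image_eq_integral_abs_deriv_smul measurableSet_Ioc hderiv sqInj g
  -- pointwise identification of the substituted integrand
  have hEq : Set.EqOn (fun x : ℝ => |2 * x| • g (x ^ 2))
      (fun x : ℝ => (2:ℂ) * Fk x) (Set.Ioc 0 1) := by
    intro x hx
    have hx0 : (0:ℝ) < x := hx.1
    have habs : |2 * x| = 2 * x := abs_of_pos (by linarith)
    have hreal : (2 * x) * ((x^2 : ℝ) ^ (α+(k:ℝ)) * (1-x^2) ^ (β-1 : ℝ))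
        = 2 * (x ^ (2*k) * (x ^ (2*α+1 : ℝ) * (1-x^2) ^ (β-1 : ℝ))) := by
      have h2 : (x^2 : ℝ) ^ (α+(k:ℝ)) = x ^ (2*(α+(k:ℝ))) := by
        rw [← Real.rpow_natCast x 2, ← Real.rpow_mul hx0.le]
        norm_num
      have h3 : (x : ℝ) ^ (2*k) = x ^ ((2*k : ℕ) : ℝ) :=
        (Real.rpow_natCast x (2*k)).symm
      rw [h2, h3]
      have h4 : x * x ^ (2*(α+(k:ℝ))) = x ^ (((2*k : ℕ) : ℝ) + (2*α+1)) := by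
        nth_rewrite 1 [← Real.rpow_one x]
        rw [← Real.rpow_add hx0]
        congr 1
        push_cast
        ring
      calc (2 * x) * (x ^ (2*(α+(k:ℝ))) * (1-x^2) ^ (β-1 : ℝ))
          = 2 * ((x * x ^ (2*(α+(k:ℝ)))) * (1-x^2) ^ (β-1 : ℝ)) := by ring
        _ = 2 * (x ^ (((2*k : ℕ) : ℝ) + (2*α+1)) * (1-x^2) ^ (β-1 : ℝ)) := by
            rw [h4]
        _ = 2 * (x ^ (((2*k : ℕ) : ℝ)) * (x ^ (2*α+1 : ℝ) * (1-x^2) ^ (β-1 : ℝ))) := by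
            rw [Real.rpow_add hx0]; ring
    show |2 * x| • g (x ^ 2) = (2:ℂ) * Fk x
    rw [habs, hg, hFk]
    simp only [real_smul]
    have hreal' := congrArg (Complex.ofReal) hreal
    push_cast at hreal' ⊢
    linear_combination hreal'
  have hEqInt : ∫ x in Set.Ioc (0:ℝ) 1, |2 * x| • g (x ^ 2)
      = 2 * ∫ x in Set.Ioc (0:ℝ) 1, Fk x := by
    rw [setIntegral_congr_fun measurableSet_Ioc hEq, MeasureTheory.integral_const_mul 2 Fk]
  -- integrability of Fk
  have hSubInt : IntegrableOn (fun x : ℝ => |2 * x| • g (x ^ 2)) (Set.Ioc 0 1) := by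
    have := (integrableOn_image_iff_integrableOn_abs_deriv_smul measurableSet_Ioc hderiv sqInj g).1
    rw [sqImage] at this
    exact this hgInt
  have hFkInt : IntegrableOn Fk (Set.Ioc 0 1) := by
    have h2 : IntegrableOn (fun x : ℝ => (2:ℂ) * Fk x) (Set.Ioc 0 1) :=
      hSubInt.congr_fun hEq measurableSet_Ioc
    have h3 : IntegrableOn (fun x : ℝ => (2:ℂ)⁻¹ * ((2:ℂ) * Fk x)) (Set.Ioc 0 1) :=
      h2.const_mul ((2:ℂ)⁻¹)
    refine h3.congr_fun ?_ measurableSet_Ioc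
    intro x _
    show (2:ℂ)⁻¹ * ((2:ℂ) * Fk x) = Fk x
    ring
  refine ⟨hFkInt, ?_⟩
  -- Gamma identity
  have hGne : ((Real.Gamma (α+β+k+1) : ℂ)) ≠ 0 := by
    simpa using (Real.Gamma_pos_of_pos (by linarith : (0:ℝ) < α+β+k+1)).ne'
  have hbeta : Complex.betaIntegral ((α:ℂ)+(k:ℕ)+1) (β:ℂ) * (Real.Gamma (α+β+k+1) : ℂ)
      = (Real.Gamma (α+k+1) : ℂ) * (Real.Gamma β : ℂ) := by
    have h := Complex.Gamma_mul_Gamma_eq_betaIntegral hre1 hre2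
    have e3 : ((α:ℂ)+(k:ℕ)+1) = ((α+k+1 : ℝ) : ℂ) := by push_cast; ring
    have e4 : ((α+k+1 : ℝ) : ℂ) + (β:ℂ) = ((α+β+k+1 : ℝ) : ℂ) := by push_cast; ring
    rw [e3, e4, Complex.Gamma_ofReal, Complex.Gamma_ofReal, Complex.Gamma_ofReal] at h
    rw [e3]
    linear_combination -h
  have hval : Complex.betaIntegral ((α:ℂ)+(k:ℕ)+1) (β:ℂ)
      = 2 * ∫ x in Set.Ioc (0:ℝ) 1, Fk x := by
    rw [← hgVal, hcv, hEqInt]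
  rw [eq_div_iff (mul_ne_zero two_ne_zero hGne)]
  linear_combination hbeta - (Real.Gamma (α+β+k+1) : ℂ) * hval

/-- The normalized one-variable Bessel function `j_α(z) = ₀F₁(α+1; -z²/4)`. -/
noncomputable def jBessel (α z : ℂ) : ℂ :=
  ∑' k : ℕ, (-1) ^ k * Complex.Gamma (α + 1) /
      ((k.factorial : ℂ) * Complex.Gamma (α + k + 1)) * (z / 2) ^ (2 * k)


/-- Sonine formula: for real `α > -1`, `β > 0` and `z ∈ ℂ`,
`j_{α+β}(z) = 2 Γ(α+β+1)/(Γ(α+1)Γ(β)) ∫₀¹ j_α(zx) x^{2α+1} (1-x²)^{β-1} dx`. -/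
theorem stmt_1 (α β : ℝ) (hα : α > -1) (hβ : β > 0) (z : ℂ) :
    jBessel ((α : ℂ) + (β : ℂ)) z =
      2 * ((Real.Gamma (α + β + 1) : ℂ) / ((Real.Gamma (α + 1) : ℂ) * (Real.Gamma β : ℂ))) *
        ∫ x in (0:ℝ)..1,
          jBessel (α : ℂ) (z * (x : ℂ)) *
            ((Real.rpow x (2 * α + 1) * Real.rpow (1 - x ^ 2) (β - 1) : ℝ) : ℂ) := by
  have h2α : (0:ℝ) < α + 1 := by linarith
  have hΓa : (0:ℝ) < Real.Gamma (α+1) := Real.Gamma_pos_of_pos h2α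
  set m : ℝ := min 1 (α+1) * Real.Gamma (α+1) with hm
  have hm0 : 0 < m := mul_pos (lt_min one_pos h2α) hΓa
  set C : ℝ := Real.Gamma (α+1) / m with hC
  set r : ℝ := (‖z‖ / 2)^2 with hrdef
  have hr0 : 0 ≤ r := sq_nonneg _
  set W : ℝ → ℝ := fun x => x ^ (2*α+1 : ℝ) * (1-x^2) ^ (β-1 : ℝ) with hWdef
  set A : ℕ → ℂ := fun k => (-1)^k * Complex.Gamma ((α:ℂ) + 1) /
      ((k.factorial : ℂ) * Complex.Gamma ((α:ℂ) + k + 1)) with hA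
  set f : ℕ → ℝ → ℂ := fun k x => A k * ((z * (x:ℂ)) / 2) ^ (2*k) * ((W x : ℝ) : ℂ) with hf
  -- pointwise tsum identity
  have hpt : ∀ x : ℝ, jBessel (α:ℂ) (z * (x:ℂ)) * ((W x : ℝ) : ℂ) = ∑' k, f k x := by
    intro x
    rw [jBessel, ← tsum_mul_right]
  -- integrability of each f k
  have hfk_int : ∀ k, IntegrableOn (f k) (Set.Ioc 0 1) := by
    intro k
    have h : IntegrableOn (fun x : ℝ => (A k * (z/2)^(2*k)) *
        ((x:ℂ)^(2*k) * ((W x : ℝ) : ℂ))) (Set.Ioc 0 1) :=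
      ((keyInt hα hβ k).1.const_mul (A k * (z/2)^(2*k)))
    refine h.congr_fun ?_ measurableSet_Ioc
    intro x _
    show A k * (z/2)^(2*k) * ((x:ℂ)^(2*k) * ((W x : ℝ) : ℂ)) = f k x
    rw [hf]
    show _ = A k * ((z * (x:ℂ)) / 2) ^ (2*k) * ((W x : ℝ) : ℂ)
    rw [show z * (x:ℂ) / 2 = z/2 * (x:ℂ) by ring, mul_pow]
    ring
  -- value of each integral
  have hfk_val : ∀ k, ∫ x in Set.Ioc (0:ℝ) 1, f k x
      = A k * (z/2)^(2*k) *
        ((Real.Gamma (α+k+1) : ℂ) * (Real.Gamma β : ℂ) / (2 * (Real.Gamma (α+β+k+1) : ℂ))) := by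
    intro k
    have h1 : ∀ x ∈ Set.Ioc (0:ℝ) 1, f k x
        = (A k * (z/2)^(2*k)) * ((x:ℂ)^(2*k) * ((W x : ℝ) : ℂ)) := by
      intro x _
      rw [hf]
      show A k * ((z * (x:ℂ)) / 2) ^ (2*k) * ((W x : ℝ) : ℂ) = _
      rw [show z * (x:ℂ) / 2 = z/2 * (x:ℂ) by ring, mul_pow]
      ring
    rw [setIntegral_congr_fun measurableSet_Ioc h1, MeasureTheory.integral_const_mul,
      (keyInt hα hβ k).2]
  -- integrability of W
  have hWc : IntegrableOn (fun x : ℝ => ((W x : ℝ) : ℂ)) (Set.Ioc 0 1) :=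
    (keyInt hα hβ 0).1.congr_fun (fun x _ => by simp only [hWdef]; push_cast; ring) measurableSet_Ioc
  have hWint : IntegrableOn W (Set.Ioc 0 1) := by
    have h := hWc.re
    simp at h; exact h
  set IW : ℝ := ∫ x in Set.Ioc (0:ℝ) 1, W x with hIW
  -- norm bound on coefficients
  have hAbound : ∀ k : ℕ, ‖A k‖ ≤ C / (k.factorial : ℝ) := by
    intro k
    have e1 : (α:ℂ)+1 = ((α+1 : ℝ) : ℂ) := by push_cast; ring
    have e2 : (α:ℂ)+(k:ℕ)+1 = ((α+k+1 : ℝ) : ℂ) := by push_cast; ring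
    have e : A k = (-1)^k * ((Real.Gamma (α+1) : ℝ) : ℂ) /
        ((k.factorial : ℂ) * ((Real.Gamma (α+k+1) : ℝ) : ℂ)) := by
      simp only [hA, e1, e2, Complex.Gamma_ofReal]
    have hΓk : m ≤ Real.Gamma (α+k+1) := by
      have h := gammaLB h2α k
      rwa [show α+1+(k:ℝ) = α+k+1 by ring] at h
    have hΓkpos : 0 < Real.Gamma (α+k+1) := lt_of_lt_of_le hm0 hΓk
    have hfac : (0:ℝ) < (k.factorial : ℝ) := by positivity
    rw [e]
    have hnorm : ‖(-1:ℂ)^k * ((Real.Gamma (α+1) : ℝ) : ℂ) /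
        ((k.factorial : ℂ) * ((Real.Gamma (α+k+1) : ℝ) : ℂ))‖
        = Real.Gamma (α+1) / ((k.factorial : ℝ) * Real.Gamma (α+k+1)) := by
      simp [norm_div, norm_mul, Complex.norm_real, Real.norm_eq_abs,
        _root_.abs_of_pos hΓa, _root_.abs_of_pos hΓkpos, Complex.norm_natCast]
    rw [hnorm, hC, div_div]
    exact div_le_div_of_nonneg_left hΓa.le (by positivity)
      (by nlinarith)
  -- summability of integrals of norms
  have hWnn : ∀ x ∈ Set.Ioc (0:ℝ) 1, 0 ≤ W x := by
    intro x hx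
    have h1 : (0:ℝ) ≤ 1 - x^2 := by nlinarith [hx.1, hx.2]
    exact mul_nonneg (Real.rpow_nonneg hx.1.le _) (Real.rpow_nonneg h1 _)
  have hnormint : ∀ k : ℕ, (∫ x in Set.Ioc (0:ℝ) 1, ‖f k x‖)
      ≤ (C / (k.factorial : ℝ) * r^k) * IW := by
    intro k
    have hb : ∀ x ∈ Set.Ioc (0:ℝ) 1, ‖f k x‖ ≤ (C / (k.factorial : ℝ) * r^k) * W x := by
      intro x hx
      have hx1 : |x| ≤ 1 := by
        rw [abs_of_pos hx.1]; exact hx.2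
      have hz : ‖z * (x:ℂ) / 2‖ ≤ ‖z‖ / 2 := by
        have he : ‖z * (x:ℂ) / 2‖ = ‖z‖ * |x| / 2 := by
          simp [norm_div, norm_mul, Complex.norm_real]
        rw [he]
        have h0 := norm_nonneg z
        nlinarith
      have hpow : ‖z * (x:ℂ) / 2‖^(2*k) ≤ r^k := by
        rw [hrdef, ← pow_mul]
        exact pow_le_pow_left₀ (norm_nonneg _) hz _
      have hWx := hWnn x hx
      calc ‖f k x‖ = ‖A k‖ * ‖z * (x:ℂ) / 2‖^(2*k) * ‖((W x : ℝ) : ℂ)‖ := by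
            rw [hf]; simp [norm_mul, norm_pow]
        _ = ‖A k‖ * ‖z * (x:ℂ) / 2‖^(2*k) * W x := by
            rw [Complex.norm_real, Real.norm_eq_abs, _root_.abs_of_nonneg hWx]
        _ ≤ (C / (k.factorial : ℝ)) * r^k * W x := by
            apply mul_le_mul_of_nonneg_right _ hWx
            exact mul_le_mul (hAbound k) hpow (by positivity)
              ((norm_nonneg _).trans (hAbound k))
    calc (∫ x in Set.Ioc (0:ℝ) 1, ‖f k x‖)
        ≤ ∫ x in Set.Ioc (0:ℝ) 1, (C / (k.factorial : ℝ) * r^k) * W x :=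
          setIntegral_mono_on (hfk_int k).norm (hWint.const_mul _) measurableSet_Ioc hb
      _ = (C / (k.factorial : ℝ) * r^k) * IW := by
          rw [MeasureTheory.integral_const_mul, hIW]
  have hsum : Summable (fun k : ℕ => ∫ x in Set.Ioc (0:ℝ) 1, ‖f k x‖) := by
    refine Summable.of_nonneg_of_le
      (fun k => integral_nonneg (fun x => norm_nonneg _)) hnormint ?_
    have h := (Real.summable_pow_div_factorial r).mul_left (C * IW)
    refine h.congr (fun k => ?_)
    field_simp
  -- rewrite the RHS integral
  rw [intervalIntegral.integral_of_le zero_le_one]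
  simp only [Real.rpow_eq_pow]
  have hint : ∫ x in Set.Ioc (0:ℝ) 1,
      jBessel (α:ℂ) (z * (x:ℂ)) * ((x ^ (2*α+1:ℝ) * (1-x^2) ^ (β-1:ℝ) : ℝ) : ℂ)
      = ∑' k, ∫ x in Set.Ioc (0:ℝ) 1, f k x := by
    rw [MeasureTheory.integral_tsum_of_summable_integral_norm hfk_int hsum]
    congr 1
    funext x
    have h := hpt x
    simp only [hWdef] at h
    exact h
  rw [hint, ← tsum_mul_left, jBessel]
  refine tsum_congr (fun k => ?_)
  rw [hfk_val k]
  -- Gamma bookkeeping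
  have e1 : (α:ℂ)+(β:ℂ)+1 = ((α+β+1 : ℝ) : ℂ) := by push_cast; ring
  have e2 : (α:ℂ)+(β:ℂ)+(k:ℕ)+1 = ((α+β+k+1 : ℝ) : ℂ) := by push_cast; ring
  have e3 : (α:ℂ)+1 = ((α+1 : ℝ) : ℂ) := by push_cast; ring
  have e4 : (α:ℂ)+(k:ℕ)+1 = ((α+k+1 : ℝ) : ℂ) := by push_cast; ring
  simp only [hA, e1, e2, e3, e4, Complex.Gamma_ofReal]
  set P : ℂ := (z/2)^(2*k) with hP
  have n1 : ((Real.Gamma (α+β+1) : ℝ) : ℂ) ≠ 0 := by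
    simpa using (Real.Gamma_pos_of_pos (by linarith : (0:ℝ) < α+β+1)).ne'
  have n2 : ((Real.Gamma (α+β+k+1) : ℝ) : ℂ) ≠ 0 := by
    have : (0:ℝ) < α+β+k+1 := by
      have : (0:ℝ) ≤ (k:ℝ) := Nat.cast_nonneg k
      linarith
    simpa using (Real.Gamma_pos_of_pos this).ne'
  have n3 : ((Real.Gamma (α+1) : ℝ) : ℂ) ≠ 0 := by simpa using hΓa.ne'
  have n4 : ((Real.Gamma (α+k+1) : ℝ) : ℂ) ≠ 0 := by
    have : (0:ℝ) < α+k+1 := by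
      have : (0:ℝ) ≤ (k:ℝ) := Nat.cast_nonneg k
      linarith
    simpa using (Real.Gamma_pos_of_pos this).ne'
  have n5 : ((Real.Gamma β : ℝ) : ℂ) ≠ 0 := by
    simpa using (Real.Gamma_pos_of_pos hβ).ne'
  have n6 : ((k.factorial : ℕ) : ℂ) ≠ 0 := by
    exact_mod_cast (Nat.cast_ne_zero (R := ℂ)).2 (Nat.factorial_ne_zero k)
  field_simp
end

section
/- In the rank one case, for μ > 0 and ν₁, ν₂ > 0, the image measure of β_{μ,ν₁} ⊗ β_{μ+ν₁,ν₂} under the multiplication map (r,s) ↦ rs on (0,1)×(0,1) equals β_{μ,ν₁+ν₂}, where β_{a,b} is the beta probability distribution with density x^{a-1}(1-x)^{b-1}/B(a,b) on (0,1). -/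
open MeasureTheory

/-- The classical beta probability measure on `(0,1)` with parameters `a, b > 0`,
with density `x^{a-1}(1-x)^{b-1}/B(a,b)` with respect to Lebesgue measure. -/
noncomputable def betaMeasure (a b : ℝ) : Measure ℝ :=
  volume.withDensity fun x =>
    ENNReal.ofReal
      (Set.indicator (Set.Ioo (0:ℝ) 1)
        (fun x => Real.rpow x (a - 1) * Real.rpow (1 - x) (b - 1) /
          (Real.Gamma a * Real.Gamma b / Real.Gamma (a + b))) x)

open Set ENNReal

lemma betaFun_eq_complex {a b : ℝ} (x : ℝ) (hx : x ∈ Set.Icc (0:ℝ) 1) :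
    ((x : ℂ) ^ ((a:ℂ) - 1) * (1 - (x:ℂ)) ^ ((b:ℂ) - 1)) =
      ((x ^ (a-1) * (1-x) ^ (b-1) : ℝ) : ℂ) := by
  obtain ⟨h0, h1⟩ := hx
  have e1 : ((a:ℂ) - 1) = ((a - 1 : ℝ) : ℂ) := by push_cast; ring
  have e2 : ((b:ℂ) - 1) = ((b - 1 : ℝ) : ℂ) := by push_cast; ring
  have e3 : (1 - (x:ℂ)) = ((1 - x : ℝ) : ℂ) := by push_cast; ring
  rw [e1, e2, e3, ← Complex.ofReal_cpow h0, ← Complex.ofReal_cpow (by linarith)]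
  push_cast
  ring

lemma betaIntegrable (a b : ℝ) (ha : 0 < a) (hb : 0 < b) :
    IntervalIntegrable (fun x => x ^ (a-1) * (1-x) ^ (b-1)) volume 0 1 := by
  have h := Complex.betaIntegral_convergent (u := a) (v := b) (by simpa) (by simpa)
  rw [intervalIntegrable_iff_integrableOn_Ioc_of_le (by norm_num)] at h ⊢
  have h2 := (h.congr_fun (fun x hx => (betaFun_eq_complex x ⟨hx.1.le, hx.2⟩)) measurableSet_Ioc)
  have hre := h2.re
  simp at hre
  exact hre

lemma betaIntegralVal (a b : ℝ) (ha : 0 < a) (hb : 0 < b) :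
    ∫ x in (0:ℝ)..1, x ^ (a-1) * (1-x) ^ (b-1) =
      Real.Gamma a * Real.Gamma b / Real.Gamma (a+b) := by
  have h := Complex.Gamma_mul_Gamma_eq_betaIntegral (s := a) (t := b) (by simpa) (by simpa)
  have hc : Complex.betaIntegral a b = ((∫ x in (0:ℝ)..1, x ^ (a-1) * (1-x) ^ (b-1) : ℝ) : ℂ) := by
    rw [Complex.betaIntegral]
    rw [intervalIntegral.integral_congr (g := fun x : ℝ => ((x ^ (a-1) * (1-x) ^ (b-1) : ℝ) : ℂ))
      (fun x hx => betaFun_eq_complex x (by simpa [Set.uIcc_of_le (by norm_num : (0:ℝ) ≤ 1)] using hx))]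
    exact intervalIntegral.integral_ofReal
  rw [hc, ← Complex.ofReal_add a b, Complex.Gamma_ofReal, Complex.Gamma_ofReal,
    Complex.Gamma_ofReal, ← Complex.ofReal_mul, ← Complex.ofReal_mul] at h
  have h3 := Complex.ofReal_injective h
  have hg : Real.Gamma (a+b) ≠ 0 := (Real.Gamma_pos_of_pos (by linarith)).ne'
  field_simp
  linarith [h3]


lemma keyalg {b c t s : ℝ} (ht1 : 0 < 1 - t) (hs : t ≤ s) (hs1 : s ≤ 1) :
    (1-t)^(b-1) * (1-t)^(c-1) *
      (((1-t)⁻¹*(s-t))^(b-1) * (1-(1-t)⁻¹*(s-t))^(c-1)) = (s-t)^(b-1) * (1-s)^(c-1) := by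
  have e : 1-(1-t)⁻¹*(s-t) = (1-t)⁻¹*(1-s) := by field_simp; ring
  rw [e, Real.mul_rpow (by positivity) (by linarith), Real.mul_rpow (by positivity) (by linarith),
    Real.inv_rpow ht1.le, Real.inv_rpow ht1.le]
  have h1 : (1-t)^(b-1) ≠ 0 := (Real.rpow_pos_of_pos ht1 _).ne'
  have h2 : (1-t)^(c-1) ≠ 0 := (Real.rpow_pos_of_pos ht1 _).ne'
  field_simp

lemma shiftIntegrable {b c t : ℝ} (hb : 0 < b) (hc : 0 < c) (ht0 : 0 < t) (ht1 : t < 1) :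
    IntegrableOn (fun s => (s-t)^(b-1) * (1-s)^(c-1)) (Ioc t 1) volume := by
  have h1 := betaIntegrable b c hb hc
  have h2 := h1.comp_mul_left (c := (1-t)⁻¹)
  have ht1' : (0:ℝ) < 1 - t := by linarith
  rw [show (0:ℝ) / (1-t)⁻¹ = 0 by simp, show (1:ℝ) / (1-t)⁻¹ = 1 - t by field_simp] at h2
  have h3 := h2.comp_sub_right t
  rw [show (0:ℝ) + t = t by ring, show (1 - t) + t = 1 by ring] at h3
  have h4 := h3.const_mul ((1-t)^(b-1) * (1-t)^(c-1))
  have h5 : IntegrableOn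
      (fun x => (1-t)^(b-1) * (1-t)^(c-1) * (((1-t)⁻¹*(x-t))^(b-1) * (1-(1-t)⁻¹*(x-t))^(c-1)))
      (Ioc t 1) volume := by
    have := (intervalIntegrable_iff_integrableOn_Ioc_of_le ht1.le).mp h4
    exact this
  exact (h5.congr_fun (fun s hs => keyalg ht1' hs.1.le hs.2) measurableSet_Ioc)

lemma shiftIntegralVal {b c t : ℝ} (hb : 0 < b) (hc : 0 < c) (ht0 : 0 < t) (ht1 : t < 1) :
    ∫ s in t..1, (s-t)^(b-1) * (1-s)^(c-1) =
      (1-t)^(b+c-1) * (Real.Gamma b * Real.Gamma c / Real.Gamma (b+c)) := by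
  have ht1' : (0:ℝ) < 1 - t := by linarith
  have step1 : ∫ s in t..1, (s-t)^(b-1) * (1-s)^(c-1)
      = ∫ u in (0:ℝ)..(1-t), u^(b-1) * ((1-t)-u)^(c-1) := by
    have := intervalIntegral.integral_comp_sub_right
      (a := t) (b := 1) (fun u => u^(b-1) * ((1-t)-u)^(c-1)) t
    rw [show t - t = (0:ℝ) by ring] at this
    rw [← this]
    apply intervalIntegral.integral_congr
    intro s _
    show (s-t)^(b-1) * (1-s)^(c-1) = (s-t)^(b-1) * (1-t-(s-t))^(c-1)
    rw [show (1:ℝ)-t-(s-t) = 1-s from by ring]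
  rw [step1]
  have step2 : ∫ u in (0:ℝ)..(1-t), u^(b-1) * ((1-t)-u)^(c-1)
      = (1-t) • ∫ y in (0:ℝ)..1, ((1-t)*y)^(b-1) * ((1-t)-(1-t)*y)^(c-1) := by
    rw [intervalIntegral.smul_integral_comp_mul_left
      (fun u => u^(b-1) * ((1-t)-u)^(c-1)) (1-t), mul_zero, mul_one]
  rw [step2]
  have step3 : ∫ y in (0:ℝ)..1, ((1-t)*y)^(b-1) * ((1-t)-(1-t)*y)^(c-1)
      = (1-t)^(b-1) * (1-t)^(c-1) * ∫ y in (0:ℝ)..1, y^(b-1) * (1-y)^(c-1) := by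
    rw [← intervalIntegral.integral_const_mul]
    apply intervalIntegral.integral_congr
    intro y hy
    rw [Set.uIcc_of_le (by norm_num : (0:ℝ) ≤ 1)] at hy
    obtain ⟨hy0, hy1⟩ := hy
    show ((1-t)*y)^(b-1) * (1-t-(1-t)*y)^(c-1)
      = (1-t)^(b-1) * (1-t)^(c-1) * (y^(b-1) * (1-y)^(c-1))
    rw [show (1:ℝ)-t-(1-t)*y = (1-t)*(1-y) from by ring,
      Real.mul_rpow ht1'.le hy0, Real.mul_rpow ht1'.le (by linarith)]
    ring
  rw [step3, betaIntegralVal b c hb hc, smul_eq_mul]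
  have key : (1-t)^(b+c-1) = (1-t)^(b-1) * (1-t)^(c-1) * (1-t) := by
    rw [show b+c-1 = (b-1)+((c-1)+1) by ring, Real.rpow_add ht1', Real.rpow_add ht1',
      Real.rpow_one]
    ring
  rw [key]
  ring


noncomputable def betaDen (a b : ℝ) : ℝ → ℝ≥0∞ := fun x =>
  ENNReal.ofReal
    (Set.indicator (Set.Ioo (0:ℝ) 1)
      (fun x => Real.rpow x (a - 1) * Real.rpow (1 - x) (b - 1) /
        (Real.Gamma a * Real.Gamma b / Real.Gamma (a + b))) x)


lemma betaDen_of_mem {a b x : ℝ} (hx : x ∈ Set.Ioo (0:ℝ) 1) :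
    betaDen a b x = ENNReal.ofReal
      (x ^ (a-1) * (1-x) ^ (b-1) / (Real.Gamma a * Real.Gamma b / Real.Gamma (a+b))) := by
  rw [betaDen, Set.indicator_of_mem hx]
  rfl

lemma betaDen_of_not_mem {a b x : ℝ} (hx : x ∉ Set.Ioo (0:ℝ) 1) :
    betaDen a b x = 0 := by
  rw [betaDen, Set.indicator_of_notMem hx]
  simp

lemma key (μ ν₁ ν₂ : ℝ) (hμ : μ > 0) (hν₁ : ν₁ > 0) (hν₂ : ν₂ > 0) (t : ℝ) :
    ∫⁻ s, betaDen (μ + ν₁) ν₂ s * ENNReal.ofReal s⁻¹ * betaDen μ ν₁ (t/s)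
      = betaDen μ (ν₁+ν₂) t := by
  have hΓμ := Real.Gamma_pos_of_pos hμ
  have hΓν₁ := Real.Gamma_pos_of_pos hν₁
  have hΓν₂ := Real.Gamma_pos_of_pos hν₂
  have hΓμν₁ := Real.Gamma_pos_of_pos (by linarith : (0:ℝ) < μ + ν₁)
  have hΓν := Real.Gamma_pos_of_pos (by linarith : (0:ℝ) < ν₁ + ν₂)
  have hΓall := Real.Gamma_pos_of_pos (by linarith : (0:ℝ) < μ + ν₁ + ν₂)
  set B₁ := Real.Gamma μ * Real.Gamma ν₁ / Real.Gamma (μ + ν₁) with hB₁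
  set B₂ := Real.Gamma (μ + ν₁) * Real.Gamma ν₂ / Real.Gamma (μ + ν₁ + ν₂) with hB₂
  have hB₁pos : 0 < B₁ := by positivity
  have hB₂pos : 0 < B₂ := by positivity
  by_cases ht : t ∈ Set.Ioo (0:ℝ) 1
  · obtain ⟨ht0, ht1⟩ := ht
    have hIoo : ∀ s : ℝ,
        betaDen (μ + ν₁) ν₂ s * ENNReal.ofReal s⁻¹ * betaDen μ ν₁ (t/s)
        = (Set.Ioo t 1).indicator
            (fun s => ENNReal.ofReal
              (t ^ (μ-1) / (B₁ * B₂) * ((s-t) ^ (ν₁-1) * (1-s) ^ (ν₂-1)))) s := by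
      intro s
      by_cases hs : s ∈ Set.Ioo t 1
      · obtain ⟨hts, hs1⟩ := hs
        have hs0 : 0 < s := lt_trans ht0 hts
        have htsmem : t/s ∈ Set.Ioo (0:ℝ) 1 := by
          constructor
          · positivity
          · rw [div_lt_one hs0]; exact hts
        rw [Set.indicator_of_mem (Set.mem_Ioo.mpr ⟨hts, hs1⟩),
          betaDen_of_mem (Set.mem_Ioo.mpr ⟨hs0, hs1⟩), betaDen_of_mem htsmem]
        have hXnn : (0:ℝ) ≤ s ^ (μ+ν₁-1) * (1-s) ^ (ν₂-1) /
            (Real.Gamma (μ+ν₁) * Real.Gamma ν₂ / Real.Gamma (μ+ν₁+ν₂)) :=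
          div_nonneg (mul_nonneg (Real.rpow_nonneg hs0.le _)
            (Real.rpow_nonneg (by linarith) _)) (by positivity)
        rw [← ENNReal.ofReal_mul hXnn, ← ENNReal.ofReal_mul (mul_nonneg hXnn (by positivity))]
        congr 1
        have e1 : (t/s) ^ (μ-1) = t ^ (μ-1) / s ^ (μ-1) := Real.div_rpow ht0.le hs0.le _
        have e2 : 1 - t/s = (s-t)/s := by field_simp
        have e3 : ((s-t)/s) ^ (ν₁-1) = (s-t) ^ (ν₁-1) / s ^ (ν₁-1) :=
          Real.div_rpow (by linarith) hs0.le _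
        have e4 : s ^ (μ+ν₁-1) = s ^ (μ-1) * s ^ (ν₁-1) * s := by
          rw [show μ+ν₁-1 = (μ-1)+((ν₁-1)+1) by ring, Real.rpow_add hs0, Real.rpow_add hs0,
            Real.rpow_one]
          ring
        have hp1 : (0:ℝ) < s ^ (μ-1) := Real.rpow_pos_of_pos hs0 _
        have hp2 : (0:ℝ) < s ^ (ν₁-1) := Real.rpow_pos_of_pos hs0 _
        have hnum : s ^ (μ+ν₁-1) * (1-s) ^ (ν₂-1) * s⁻¹ * ((t/s) ^ (μ-1) * (1-t/s) ^ (ν₁-1))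
            = t ^ (μ-1) * ((s-t) ^ (ν₁-1) * (1-s) ^ (ν₂-1)) := by
          rw [e1, e2, e3, e4]
          field_simp
        rw [← hB₁, ← hB₂]
        linear_combination hnum / (B₁ * B₂)
      · rw [Set.indicator_of_notMem hs]
        rcases le_or_gt s t with hst | hts
        · rcases le_or_gt s 0 with hs0 | hs0
          · rw [betaDen_of_not_mem (by simp [Set.mem_Ioo]; intro h; linarith)]
            simp
          · have : t/s ∉ Set.Ioo (0:ℝ) 1 := by
              simp only [Set.mem_Ioo, not_and_or, not_lt]
              right
              rw [le_div_iff₀ hs0, one_mul]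
              exact hst
            rw [betaDen_of_not_mem this]
            simp
        · have hs1 : 1 ≤ s := by
            by_contra h
            exact hs ⟨hts, lt_of_not_ge h⟩
          rw [betaDen_of_not_mem (by simp [Set.mem_Ioo]; intro h; linarith)]
          simp
    simp_rw [hIoo]
    rw [lintegral_indicator measurableSet_Ioo]
    have hnn : 0 ≤ᵐ[volume.restrict (Set.Ioo t 1)]
        fun s => t ^ (μ-1) / (B₁ * B₂) * ((s-t) ^ (ν₁-1) * (1-s) ^ (ν₂-1)) := by
      refine (ae_restrict_iff' measurableSet_Ioo).mpr (ae_of_all _ fun s hs => ?_)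
      have h1 : (0:ℝ) ≤ (s-t) ^ (ν₁-1) := Real.rpow_nonneg (by linarith [hs.1]) _
      have h2 : (0:ℝ) ≤ (1-s) ^ (ν₂-1) := Real.rpow_nonneg (by linarith [hs.2]) _
      positivity
    have hInt : Integrable (fun s => t ^ (μ-1) / (B₁ * B₂) * ((s-t) ^ (ν₁-1) * (1-s) ^ (ν₂-1)))
        (volume.restrict (Set.Ioo t 1)) := by
      apply Integrable.const_mul
      exact ((shiftIntegrable hν₁ hν₂ ht0 ht1).mono_set Set.Ioo_subset_Ioc_self)
    rw [← ofReal_integral_eq_lintegral_ofReal hInt hnn]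
    rw [betaDen_of_mem ⟨ht0, ht1⟩]
    congr 1
    rw [MeasureTheory.integral_const_mul, ← integral_Ioc_eq_integral_Ioo,
      ← intervalIntegral.integral_of_le ht1.le, shiftIntegralVal hν₁ hν₂ ht0 ht1]
    rw [hB₁, hB₂, show μ + (ν₁ + ν₂) = μ + ν₁ + ν₂ by ring]
    field_simp [hΓμν₁.ne', hΓall.ne', hΓμ.ne', hΓν₁.ne', hΓν₂.ne', hΓν.ne']
  · rw [betaDen_of_not_mem ht]
    rw [show (0:ℝ≥0∞) = ∫⁻ _ : ℝ, 0 by simp]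
    apply lintegral_congr
    intro s
    by_cases hs : s ∈ Set.Ioo (0:ℝ) 1
    · have : t/s ∉ Set.Ioo (0:ℝ) 1 := by
        simp only [Set.mem_Ioo, not_and_or, not_lt] at ht ⊢
        rcases ht with ht | ht
        · left
          exact div_nonpos_of_nonpos_of_nonneg ht hs.1.le
        · right
          rw [le_div_iff₀ hs.1, one_mul]
          linarith [hs.2]
      rw [betaDen_of_not_mem this]
      simp
    · rw [betaDen_of_not_mem hs]
      simp


lemma betaMeasure_eq (a b : ℝ) : betaMeasure a b = volume.withDensity (betaDen a b) := rfl

lemma betaDen_measurable (a b : ℝ) : Measurable (betaDen a b) := by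
  apply ENNReal.measurable_ofReal.comp
  apply Measurable.indicator _ measurableSet_Ioo
  show Measurable fun x : ℝ => x ^ (a-1) * (1-x) ^ (b-1) /
    (Real.Gamma a * Real.Gamma b / Real.Gamma (a+b))
  exact ((measurable_id.pow measurable_const).mul
    ((measurable_const.sub measurable_id).pow measurable_const)).div_const _

-- change of variables lemma
lemma cov {s : ℝ} (hs : 0 < s) {G : ℝ → ℝ≥0∞} (hG : Measurable G) :
    ∫⁻ r, G (s * r) = ENNReal.ofReal s⁻¹ * ∫⁻ t, G t := by
  have h1 : ∫⁻ r, G (s * r) = ∫⁻ t, G t ∂(Measure.map (fun r => s * r) volume) :=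
    (lintegral_map hG (measurable_const_mul s)).symm
  rw [h1, Real.map_volume_mul_left hs.ne', lintegral_smul_measure, abs_of_pos (by positivity), smul_eq_mul]

/-- Rank-one composition of beta measures: the image of `β_{μ,ν₁} ⊗ β_{μ+ν₁,ν₂}` under
`(r,s) ↦ rs` equals `β_{μ,ν₁+ν₂}`. -/
theorem stmt_10 (μ ν₁ ν₂ : ℝ) (hμ : μ > 0) (hν₁ : ν₁ > 0) (hν₂ : ν₂ > 0) :
    Measure.map (fun p : ℝ × ℝ => p.1 * p.2)
        ((betaMeasure μ ν₁).prod (betaMeasure (μ + ν₁) ν₂)) =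
      betaMeasure μ (ν₁ + ν₂) := by
  have hmul : Measurable (fun p : ℝ × ℝ => p.1 * p.2) := measurable_fst.mul measurable_snd
  set f₁ := betaDen μ ν₁ with hf₁def
  set f₂ := betaDen (μ + ν₁) ν₂ with hf₂def
  set f₃ := betaDen μ (ν₁ + ν₂) with hf₃def
  have hf₁ : Measurable f₁ := betaDen_measurable _ _
  have hf₂ : Measurable f₂ := betaDen_measurable _ _
  have hf₃ : Measurable f₃ := betaDen_measurable _ _
  rw [betaMeasure_eq, betaMeasure_eq, betaMeasure_eq]
  ext A hA
  rw [Measure.map_apply hmul hA, ← lintegral_indicator_one (hmul hA)]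
  have hind : Measurable (A.indicator (1 : ℝ → ℝ≥0∞)) := measurable_one.indicator hA
  calc
    ∫⁻ p, ((fun p : ℝ × ℝ => p.1 * p.2) ⁻¹' A).indicator 1 p
        ∂((volume.withDensity f₁).prod (volume.withDensity f₂))
      = ∫⁻ p : ℝ × ℝ, A.indicator 1 (p.1 * p.2)
        ∂((volume.withDensity f₁).prod (volume.withDensity f₂)) := by
        apply lintegral_congr
        intro p
        by_cases h : p.1 * p.2 ∈ A <;> simp [Set.indicator, h, Set.mem_preimage]
    _ = ∫⁻ s, ∫⁻ r, A.indicator 1 (r * s) ∂(volume.withDensity f₁)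
          ∂(volume.withDensity f₂) :=
        lintegral_prod_symm _ (hind.comp hmul).aemeasurable
    _ = ∫⁻ s, (∫⁻ r, f₁ r * A.indicator 1 (r * s)) ∂(volume.withDensity f₂) := by
        apply lintegral_congr
        intro s
        exact lintegral_withDensity_eq_lintegral_mul volume hf₁
          (hind.comp (measurable_id.mul_const s))
    _ = ∫⁻ s, f₂ s * ∫⁻ r, f₁ r * A.indicator 1 (r * s) := by
        apply lintegral_withDensity_eq_lintegral_mul volume hf₂
        apply Measurable.lintegral_prod_right'
          (f := fun q : ℝ × ℝ => f₁ q.2 * A.indicator 1 (q.2 * q.1))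
        exact (hf₁.comp measurable_snd).mul (hind.comp (measurable_snd.mul measurable_fst))
    _ = ∫⁻ s, f₂ s * (ENNReal.ofReal s⁻¹ * ∫⁻ t, A.indicator 1 t * f₁ (t / s)) := by
        apply lintegral_congr
        intro s
        rcases le_or_gt s 0 with hs | hs
        · -- f₂ s = 0
          have : f₂ s = 0 := by
            rw [hf₂def, betaDen, Set.indicator_of_notMem (by simp [mem_Ioo]; intro h; linarith)]
            simp
          simp [this]
        · congr 1
          have hGm : Measurable (fun t => A.indicator 1 t * f₁ (t / s)) :=
            hind.mul (hf₁.comp (measurable_id.div_const s))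
          have := cov hs hGm
          rw [← this]
          apply lintegral_congr
          intro r
          rw [mul_comm (A.indicator 1 (s * r)) (f₁ (s * r / s)),
            mul_div_cancel_left₀ r hs.ne', mul_comm s r]
    _ = ∫⁻ s, ∫⁻ t, f₂ s * ENNReal.ofReal s⁻¹ * (A.indicator 1 t * f₁ (t / s)) := by
        apply lintegral_congr
        intro s
        have hGm : Measurable fun t : ℝ => A.indicator 1 t * f₁ (t / s) := by
          exact hind.mul (hf₁.comp (measurable_id.div_const s))
        rw [← lintegral_const_mul _ hGm,
          ← lintegral_const_mul' (f₂ s) _ (show f₂ s ≠ ⊤ from ENNReal.ofReal_ne_top)]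
        simp [mul_assoc]
    _ = ∫⁻ t, ∫⁻ s, f₂ s * ENNReal.ofReal s⁻¹ * (A.indicator 1 t * f₁ (t / s)) := by
        apply lintegral_lintegral_swap
        apply Measurable.aemeasurable
        exact (((hf₂.comp measurable_fst).mul
            ((ENNReal.measurable_ofReal.comp measurable_inv).comp measurable_fst)).mul
          ((hind.comp measurable_snd).mul (hf₁.comp (measurable_snd.div measurable_fst))))
    _ = ∫⁻ t, A.indicator 1 t * ∫⁻ s, f₂ s * ENNReal.ofReal s⁻¹ * f₁ (t / s) := by
        apply lintegral_congr
        intro t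
        rw [← lintegral_const_mul' _ _ (by
          by_cases h : t ∈ A <;> simp [Set.indicator, h])]
        apply lintegral_congr
        intro s
        ring
    _ = ∫⁻ t, A.indicator 1 t * f₃ t := by
        apply lintegral_congr
        intro t
        rw [key μ ν₁ ν₂ hμ hν₁ hν₂ t]
    _ = ∫⁻ t in A, f₃ t := by
        rw [← lintegral_indicator hA]
        apply lintegral_congr
        intro t
        by_cases h : t ∈ A <;> simp [Set.indicator, h]
    _ = (volume.withDensity f₃) A := (withDensity_apply f₃ hA).symm
end
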